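/- arXiv:0802.1465 — 2 statements merged into one kernel-verified Lean document; each statement's English description precedes it below -/
import Mathlib

section
/- In the ε-free case, the weight assigned by the 3-way composition rule—where a transition ((q1,q2,q3), a, c, w1⊗w2⊗w3, (q1',q2',q3')) is created from transitions (q1,a,b,w1,q1') in T1, (q2,b,b',w2,q2') in T2, and (q3,b',c,w3,q3') in T3—equals (T1 ∘ T2 ∘ T3)(x,y) for every pair of strings (x,y), over a commutative semiring. -/
/-- Weight assigned by an ε-free weighted transducer (with state set `Q`,
initial weights `lam`, final weights `rho`, transition weights `E`) to a
pair of strings of length `n`, as a sum over accepting paths. -/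
noncomputable def wtWeight {K σ Q : Type} [CommSemiring K] [Fintype σ] [Fintype Q]
    (lam rho : Q → K) (E : Q → σ → σ → Q → K) (n : ℕ) (x y : Fin n → σ) : K :=
  ∑ q : Fin (n + 1) → Q,
    lam (q 0) * (∏ i : Fin n, E (q i.castSucc) (x i) (y i) (q i.succ)) *
      rho (q (Fin.last n))

/-- Functions into a pair split as a pair of functions. -/
def funProd2 {α β γ : Type} : ((α → β) × (α → γ)) ≃ (α → β × γ) where
  toFun p := fun i => (p.1 i, p.2 i)
  invFun q := (fun i => (q i).1, fun i => (q i).2)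
  left_inv p := rfl
  right_inv q := rfl

/-- Functions into a triple split as a triple of functions (reversed order). -/
def funProd3 {α β γ δ : Type} : ((α → δ) × (α → γ) × (α → β)) ≃ (α → β × γ × δ) where
  toFun p := fun i => (p.2.2 i, p.2.1 i, p.1 i)
  invFun q := (fun i => (q i).2.2, fun i => (q i).2.1, fun i => (q i).1)
  left_inv p := rfl
  right_inv q := rfl

lemma sum_funProd2 {α β γ : Type} [Fintype α] [DecidableEq α] [Fintype β] [Fintype γ]
    {M : Type} [AddCommMonoid M] (F : (α → β × γ) → M) :
    ∑ g, F g = ∑ z : α → β, ∑ z' : α → γ, F (fun i => (z i, z' i)) := by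
  rw [← Equiv.sum_comp (funProd2 (α := α) (β := β) (γ := γ)) F, Fintype.sum_prod_type]
  rfl

lemma sum_funProd3 {α β γ δ : Type} [Fintype α] [DecidableEq α] [Fintype β] [Fintype γ]
    [Fintype δ] {M : Type} [AddCommMonoid M] (F : (α → β × γ × δ) → M) :
    ∑ g, F g = ∑ c : α → δ, ∑ b : α → γ, ∑ a : α → β, F (fun i => (a i, b i, c i)) := by
  rw [← Equiv.sum_comp (funProd3 (α := α) (β := β) (γ := γ) (δ := δ)) F,
    Fintype.sum_prod_type]
  refine Finset.sum_congr rfl fun a _ => ?_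
  rw [Fintype.sum_prod_type]
  rfl

/-- The 3-way composition machine (states `Q1 × Q2 × Q3`, transitions obtained
by matching `(q1,a,b,w1,q1')`, `(q2,b,b',w2,q2')`, `(q3,b',c,w3,q3')` into a
transition of weight `w1 ⊗ w2 ⊗ w3`) computes exactly
`(T1 ∘ T2 ∘ T3)(x,y) = ⊕_{z,z'} T1(x,z) ⊗ T2(z,z') ⊗ T3(z',y)`. -/
theorem threeWay_correct {K σ Q1 Q2 Q3 : Type} [CommSemiring K] [Fintype σ]
    [Fintype Q1] [Fintype Q2] [Fintype Q3]
    (lam1 rho1 : Q1 → K) (E1 : Q1 → σ → σ → Q1 → K)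
    (lam2 rho2 : Q2 → K) (E2 : Q2 → σ → σ → Q2 → K)
    (lam3 rho3 : Q3 → K) (E3 : Q3 → σ → σ → Q3 → K)
    (n : ℕ) (x y : Fin n → σ) :
    wtWeight (fun q : Q1 × Q2 × Q3 => lam1 q.1 * lam2 q.2.1 * lam3 q.2.2)
      (fun q => rho1 q.1 * rho2 q.2.1 * rho3 q.2.2)
      (fun q a c q' => ∑ b : σ, ∑ b' : σ,
        E1 q.1 a b q'.1 * E2 q.2.1 b b' q'.2.1 * E3 q.2.2 b' c q'.2.2)
      n x y
    = ∑ z : Fin n → σ, ∑ z' : Fin n → σ,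
        wtWeight lam1 rho1 E1 n x z * wtWeight lam2 rho2 E2 n z z' *
          wtWeight lam3 rho3 E3 n z' y := by
  classical
  unfold wtWeight
  have key : ∀ q : Fin (n + 1) → Q1 × Q2 × Q3,
      (∏ i : Fin n, ∑ b : σ, ∑ b' : σ,
        E1 (q i.castSucc).1 (x i) b (q i.succ).1 *
          E2 (q i.castSucc).2.1 b b' (q i.succ).2.1 *
          E3 (q i.castSucc).2.2 b' (y i) (q i.succ).2.2)
      = ∑ g : Fin n → σ × σ, ∏ i : Fin n,
          E1 (q i.castSucc).1 (x i) (g i).1 (q i.succ).1 *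
            E2 (q i.castSucc).2.1 (g i).1 (g i).2 (q i.succ).2.1 *
            E3 (q i.castSucc).2.2 (g i).2 (y i) (q i.succ).2.2 := by
    intro q
    have h1 : ∀ i : Fin n,
        (∑ b : σ, ∑ b' : σ,
          E1 (q i.castSucc).1 (x i) b (q i.succ).1 *
            E2 (q i.castSucc).2.1 b b' (q i.succ).2.1 *
            E3 (q i.castSucc).2.2 b' (y i) (q i.succ).2.2)
        = ∑ p : σ × σ,
            E1 (q i.castSucc).1 (x i) p.1 (q i.succ).1 *
              E2 (q i.castSucc).2.1 p.1 p.2 (q i.succ).2.1 *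
              E3 (q i.castSucc).2.2 p.2 (y i) (q i.succ).2.2 := by
      intro i
      rw [Fintype.sum_prod_type]
    simp only [h1]
    exact Fintype.prod_sum _
  simp only [key, Finset.mul_sum, Finset.sum_mul]
  rw [Finset.sum_comm]
  rw [sum_funProd2]
  refine Finset.sum_congr rfl fun z _ => Finset.sum_congr rfl fun z' _ => ?_
  rw [sum_funProd3]
  refine Finset.sum_congr rfl fun q1 _ => Finset.sum_congr rfl fun q2 _ =>
    Finset.sum_congr rfl fun q3 _ => ?_
  rw [Finset.prod_mul_distrib, Finset.prod_mul_distrib]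
  ring
end

section
/- Let moves on the 3-dimensional grid be given by the letters of 𝔐 ∪ 𝔛 (coordinate 0 = stay, 1 or x = advance by one). For any two grid points P ⪯ Q in ℕ^3 there exists at least one sequence over 𝔐 avoiding the forbidden patterns of the filter W that moves from P to Q, provided the coordinates advance only by ε-moves; explicitly, with increments (n1,n2,n3) sorted so nσ(1) ≤ nσ(2) ≤ nσ(3), the sequence taking all-three diagonal moves first, then two-coordinate moves, then single-coordinate moves, is such a sequence. -/
/-- A move on the 3-dimensional grid: a triplet in {0,1}³ (true = 1). -/
abbrev Mv := Bool × Bool × Bool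

def cnt (b : Bool) : ℕ := if b then 1 else 0

/-- Componentwise sum of a sequence of moves. -/
def msum (l : List Mv) : ℕ × ℕ × ℕ :=
  ((l.map fun m => cnt m.1).sum,
   (l.map fun m => cnt m.2.1).sum,
   (l.map fun m => cnt m.2.2).sum)

/-- All moves belong to 𝔐 = {0,1}³ \ {(0,0,0)}. -/
def NoZero (l : List Mv) : Prop := ∀ m ∈ l, m ≠ ((false, false, false) : Mv)

/-- The rule: in consecutive triplets, a 0 in coordinate i in the first cannot
be followed by a 1 in coordinate i in the second (1-moves taken as early as
possible). -/
def Mono (l : List Mv) : Prop :=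
  l.Chain' fun m m' =>
    (m.1 = false → m'.1 = false) ∧ (m.2.1 = false → m'.2.1 = false) ∧
    (m.2.2 = false → m'.2.2 = false)

/-- The canonical sequence `(1,1,1)^{n1} (0,1,1)^{n2-n1} (0,0,1)^{n3-n2}`. -/
def canon3 (n1 n2 n3 : ℕ) : List Mv :=
  List.replicate n1 (true, true, true) ++
    List.replicate (n2 - n1) (false, true, true) ++
    List.replicate (n3 - n2) (false, false, true)

lemma sum_indicator (m n : ℕ) :
    ((List.range m).map fun k => cnt (decide (k < n))).sum = min m n := by
  induction m with
  | zero => simp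
  | succ m ih =>
    rw [List.range_succ, List.map_append, List.sum_append, ih]
    simp only [List.map_cons, List.map_nil, List.sum_cons, List.sum_nil, cnt]
    by_cases h : m < n
    · simp [h]; omega
    · simp [h]; omega

lemma canon3_spec (n1 n2 n3 : ℕ) (h12 : n1 ≤ n2) (h23 : n2 ≤ n3) :
    NoZero (canon3 n1 n2 n3) ∧ Mono (canon3 n1 n2 n3) ∧
      msum (canon3 n1 n2 n3) = (n1, n2, n3) := by
  refine ⟨?_, ?_, ?_⟩
  · intro m hm
    simp only [canon3, List.mem_append, List.mem_replicate] at hm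
    rcases hm with (⟨_, rfl⟩ | ⟨_, rfl⟩) | ⟨_, rfl⟩ <;> simp
  · unfold Mono canon3
    simp only [List.Chain']
    rw [List.isChain_append, List.isChain_append]
    refine ⟨⟨List.isChain_replicate_of_rel _ (by simp),
      List.isChain_replicate_of_rel _ (by simp), ?_⟩,
      List.isChain_replicate_of_rel _ (by simp), ?_⟩
    · intro x hx y hy
      have hx' := List.eq_of_mem_replicate (List.mem_of_mem_getLast? hx)
      have hy' := List.eq_of_mem_replicate (List.mem_of_mem_head? hy)
      subst hx'; subst hy'; simp
    · intro x hx y hy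
      have hx' := List.mem_of_mem_getLast? hx
      have hy' := List.eq_of_mem_replicate (List.mem_of_mem_head? hy)
      subst hy'
      rw [List.mem_append] at hx'
      rcases hx' with h | h <;>
        · have := List.eq_of_mem_replicate h; subst this; simp
  · simp only [msum, canon3, List.map_append, List.sum_append, List.map_replicate,
      List.sum_replicate, cnt, if_pos, if_neg, smul_eq_mul, Prod.mk.injEq]
    simp only [Bool.false_eq_true, if_true, if_false]
    constructor
    · omega
    constructor <;> omega

/-- The general construction: coordinate `i` is true for the first `nᵢ` steps. -/
def gen (n1 n2 n3 : ℕ) : List Mv :=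
  (List.range (max n1 (max n2 n3))).map fun k =>
    (decide (k < n1), decide (k < n2), decide (k < n3))

lemma gen_spec (n1 n2 n3 : ℕ) :
    NoZero (gen n1 n2 n3) ∧ Mono (gen n1 n2 n3) ∧
      msum (gen n1 n2 n3) = (n1, n2, n3) := by
  refine ⟨?_, ?_, ?_⟩
  · intro m hm
    simp only [gen, List.mem_map, List.mem_range] at hm
    obtain ⟨k, hk, rfl⟩ := hm
    simp only [ne_eq, Prod.mk.injEq, decide_eq_false_iff_not, not_and, not_not]
    intro hA hB
    have : k < n3 := by omega
    simp [this]
  · unfold Mono gen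
    simp only [List.Chain']
    rw [List.isChain_map]
    apply List.isChain_iff_getElem.mpr
    intro i h
    simp only [List.get_eq_getElem, List.getElem_range]
    refine ⟨?_, ?_, ?_⟩ <;>
      · intro hx
        simp only [decide_eq_false_iff_not, not_lt] at *
        omega
  · simp only [msum, gen, List.map_map, Function.comp_def]
    have h1 := sum_indicator (max n1 (max n2 n3)) n1
    have h2 := sum_indicator (max n1 (max n2 n3)) n2
    have h3 := sum_indicator (max n1 (max n2 n3)) n3
    simp only [Prod.mk.injEq]
    refine ⟨?_, ?_, ?_⟩
    · rw [h1]; omega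
    · rw [h2]; omega
    · rw [h3]; omega

/-- For any two grid points `P ⪯ Q` in ℕ³ (increments `(n1,n2,n3)`), there is a
sequence over 𝔐 = {0,1}³ \ {(0,0,0)} avoiding the forbidden patterns of the
filter W (coordinate-wise 0-then-1 in consecutive triplets, and the triplet
(0,0,0)) that moves from P to Q; when `n1 ≤ n2 ≤ n3`, the sequence taking
all-three diagonal moves first, then two-coordinate moves, then one-coordinate
moves is such a sequence. -/
theorem exists_allowed_eps_path (P Q : ℕ × ℕ × ℕ)
    (h1 : P.1 ≤ Q.1) (h2 : P.2.1 ≤ Q.2.1) (h3 : P.2.2 ≤ Q.2.2) :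
    (∃ l : List Mv, NoZero l ∧ Mono l ∧
      msum l = (Q.1 - P.1, Q.2.1 - P.2.1, Q.2.2 - P.2.2)) ∧
    (Q.1 - P.1 ≤ Q.2.1 - P.2.1 → Q.2.1 - P.2.1 ≤ Q.2.2 - P.2.2 →
      NoZero (canon3 (Q.1 - P.1) (Q.2.1 - P.2.1) (Q.2.2 - P.2.2)) ∧
      Mono (canon3 (Q.1 - P.1) (Q.2.1 - P.2.1) (Q.2.2 - P.2.2)) ∧
      msum (canon3 (Q.1 - P.1) (Q.2.1 - P.2.1) (Q.2.2 - P.2.2)) =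
        (Q.1 - P.1, Q.2.1 - P.2.1, Q.2.2 - P.2.2)) := by
  exact ⟨⟨_, gen_spec _ _ _⟩, fun h12 h23 => canon3_spec _ _ _ h12 h23⟩
end
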